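/- Let σ be a real number and r, μ : ℝ → ℝ with r twice differentiable and μ differentiable. If x, y, z : ℝ → ℝ are differentiable and satisfy the water wheel system x' = σ(y − x), y' = r(τ)x − y − xz + μ(τ), z' = xy − z + r'(τ), then z is twice differentiable and satisfies the oscillator identity z''(τ) = −z(τ) g₃(τ) + h₃(τ), where g₃ = −1 + x(τ)² and h₃ = −r'(τ) + r''(τ) + μ(τ) x(τ) − (2 + σ) x(τ) y(τ) + r(τ) x(τ)² + σ y(τ)². -/

import Mathlib

open Real

/-- Competitive modes oscillator form for the third component of the water wheel
system: `z'' = −z g₃ + h₃` with `g₃ = −1 + x²` and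
`h₃ = −r' + r'' + μx − (2 + σ) x y + r x² + σ y²`. -/
theorem water_wheel_oscillator_z
    (σ : ℝ) (r μ : ℝ → ℝ)
    (hr : Differentiable ℝ r) (hr' : Differentiable ℝ (deriv r))
    (hμ : Differentiable ℝ μ)
    (x y z : ℝ → ℝ)
    (hx : Differentiable ℝ x) (hy : Differentiable ℝ y) (hz : Differentiable ℝ z)
    (hxde : ∀ τ, deriv x τ = σ * (y τ - x τ))
    (hyde : ∀ τ, deriv y τ = r τ * x τ - y τ - x τ * z τ + μ τ)
    (hzde : ∀ τ, deriv z τ = x τ * y τ - z τ + deriv r τ) :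
    Differentiable ℝ (deriv z) ∧
      ∀ τ, deriv (deriv z) τ =
        -(z τ) * (-1 + x τ ^ 2)
          + (-(deriv r τ) + deriv (deriv r) τ + μ τ * x τ
              - (2 + σ) * x τ * y τ + r τ * x τ ^ 2 + σ * y τ ^ 2) := by
  have hzf : deriv z = fun τ => x τ * y τ - z τ + deriv r τ := funext hzde
  have hdiff : Differentiable ℝ (fun τ => x τ * y τ - z τ + deriv r τ) :=
    ((hx.mul hy).sub hz).add hr'
  refine ⟨hzf ▸ hdiff, fun τ => ?_⟩
  have : deriv (deriv z) τ = deriv x τ * y τ + x τ * deriv y τ - deriv z τ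
      + deriv (deriv r) τ := by
    rw [hzf]
    rw [deriv_fun_add (f := fun τ => x τ * y τ - z τ) (((hx.mul hy).sub hz).differentiableAt) (hr'.differentiableAt),
      deriv_fun_sub (f := fun τ => x τ * y τ) ((hx.mul hy).differentiableAt) (hz.differentiableAt),
      deriv_fun_mul hx.differentiableAt hy.differentiableAt]
    simp [hzde]
  rw [this, hxde, hyde, hzde]
  ring
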